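/- The map θ : ℝ → S¹, θ(t) = (cos t, sin t), restricted to X := (2πC ∪ (2πC + 2π)) \ {0, 4π} (C the Cantor set) has the property that the point (1,0) ∈ θ(X) has a unique preimage in X, namely 2π, while every neighbourhood of (1,0) in θ(X) contains points with at least two preimages in X. -/

import Mathlib

lemma one_mem_preCantorSet (n : ℕ) : (1:ℝ) ∈ preCantorSet n := by
  induction n with
  | zero => simp [preCantorSet]
  | succ n ih => exact Or.inr ⟨1, ih, by norm_num⟩

lemma one_mem_cantorSet : (1:ℝ) ∈ cantorSet :=
  Set.mem_iInter.mpr one_mem_preCantorSet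

lemma sub_pow_mem_preCantorSet (n m : ℕ) : 1 - (3:ℝ)⁻¹ ^ m ∈ preCantorSet n := by
  induction n generalizing m with
  | zero =>
    refine ⟨by nlinarith [pow_le_one₀ (by norm_num : (0:ℝ) ≤ 3⁻¹) (by norm_num : (3:ℝ)⁻¹ ≤ 1) (n := m)], by nlinarith [pow_pos (by norm_num : (0:ℝ) < 3⁻¹) m]⟩
  | succ n ih =>
    cases m with
    | zero => exact Or.inl ⟨0, zero_mem_preCantorSet n, by norm_num⟩
    | succ k =>
      refine Or.inr ⟨1 - (3:ℝ)⁻¹ ^ k, ih k, ?_⟩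
      simp only [pow_succ]
      ring

lemma sub_pow_mem_cantorSet (m : ℕ) : 1 - (3:ℝ)⁻¹ ^ m ∈ cantorSet :=
  Set.mem_iInter.mpr fun n => sub_pow_mem_preCantorSet n m

open Real in
/-- With `C` the ternary Cantor set,
`X := (2πC ∪ (2πC + 2π)) \ {0, 4π}` and `θ = Circle.exp`, the point `(1,0) ∈ θ(X)` has
the unique preimage `2π` in `X`, while every neighbourhood of `(1,0)` in `θ(X)` contains
points having at least two preimages in `X`. -/
theorem cantor_restriction_unique_preimage_at_one :
    ∀ (Xset : Set ℝ), Xset =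
        ((fun c : ℝ => 2 * π * c) '' cantorSet ∪
          (fun c : ℝ => 2 * π * c + 2 * π) '' cantorSet) \ {0, 4 * π} →
    ∀ (h1 : (1 : Circle) ∈ (Circle.exp '' Xset : Set Circle)),
      ({x ∈ Xset | Circle.exp x = 1} = {2 * π}) ∧
      ∀ V ∈ nhds (⟨1, h1⟩ : (Circle.exp '' Xset : Set Circle)),
        ∃ z : (Circle.exp '' Xset : Set Circle), z ∈ V ∧
          ∃ x₁ ∈ Xset, ∃ x₂ ∈ Xset, x₁ ≠ x₂ ∧
            Circle.exp x₁ = (z : Circle) ∧ Circle.exp x₂ = (z : Circle) := by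
  intro Xset hX h1
  have hπ : (0:ℝ) < π := Real.pi_pos
  constructor
  · ext x
    simp only [Set.mem_setOf_eq, Set.mem_singleton_iff]
    constructor
    · rintro ⟨hxX, hexp⟩
      rw [hX] at hxX
      obtain ⟨hxU, hxne⟩ := hxX
      simp only [Set.mem_insert_iff, Set.mem_singleton_iff, not_or] at hxne
      obtain ⟨hx0, hx4⟩ := hxne
      -- x ∈ [0, 4π]
      have hbound : 0 ≤ x ∧ x ≤ 4 * π := by
        rcases hxU with ⟨c, hc, rfl⟩ | ⟨c, hc, rfl⟩ <;>
          obtain ⟨hc0, hc1⟩ := cantorSet_subset_unitInterval hc <;>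
          dsimp only <;> constructor <;> nlinarith
      obtain ⟨n, hn⟩ := Circle.exp_eq_one.mp hexp
      have hn1 : n = 1 := by
        have h0 : 0 < (n:ℝ) * (2 * π) := lt_of_le_of_ne (hn ▸ hbound.1) (by
          rw [← hn]; exact fun h => hx0 h.symm)
        have h2 : (n:ℝ) * (2 * π) < 4 * π := lt_of_le_of_ne (hn ▸ hbound.2) (by
          rw [← hn]; exact hx4)
        have hn0 : 0 < n := by
          by_contra h
          push_neg at h
          have : (n:ℝ) ≤ 0 := by exact_mod_cast h
          nlinarith
        have hn2 : n < 2 := by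
          by_contra h
          push_neg at h
          have : (2:ℝ) ≤ (n:ℝ) := by exact_mod_cast h
          nlinarith
        omega
      rw [hn, hn1]; push_cast; ring
    · rintro rfl
      refine ⟨?_, Circle.exp_two_pi⟩
      rw [hX]
      refine ⟨Or.inl ⟨1, one_mem_cantorSet, by ring⟩, ?_⟩
      simp only [Set.mem_insert_iff, Set.mem_singleton_iff, not_or]
      constructor <;> intro h <;> nlinarith
  · intro V hV
    rw [nhds_subtype_eq_comap, Filter.mem_comap] at hV
    obtain ⟨U, hU, hUV⟩ := hV
    -- the sequence c_n = 1 - 3⁻¹^(n+1): exp (2π c_n) → 1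
    have hc : Filter.Tendsto (fun m : ℕ => 1 - (3:ℝ)⁻¹ ^ (m + 1)) Filter.atTop (nhds 1) := by
      have := tendsto_pow_atTop_nhds_zero_of_lt_one (by norm_num : (0:ℝ) ≤ 3⁻¹)
        (by norm_num : (3:ℝ)⁻¹ < 1)
      have h' := ((this.comp (Filter.tendsto_add_atTop_nat 1)))
      simpa using (tendsto_const_nhds.sub h')
    have ht : Filter.Tendsto (fun m : ℕ => Circle.exp (2 * π * (1 - (3:ℝ)⁻¹ ^ (m + 1))))
        Filter.atTop (nhds 1) := by
      have hcont := Circle.exp.continuous.tendsto (2 * π * 1)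
      have := hcont.comp (tendsto_const_nhds.mul hc)
      simpa [Circle.exp_two_pi, Function.comp_def] using this
    obtain ⟨N, hN⟩ := (Filter.eventually_atTop.mp (ht.eventually_mem hU)).imp (fun N h => h N le_rfl)
    set c : ℝ := 1 - (3:ℝ)⁻¹ ^ (N + 1) with hcdef
    have hcC : c ∈ cantorSet := sub_pow_mem_cantorSet (N + 1)
    have hc0 : 0 < c := by
      have : (3:ℝ)⁻¹ ^ (N + 1) ≤ 3⁻¹ ^ 1 :=
        pow_le_pow_of_le_one (by norm_num) (by norm_num) (by omega)
      simp only [pow_one] at this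
      rw [hcdef]; linarith
    have hc1 : c < 1 := by
      have : (0:ℝ) < (3:ℝ)⁻¹ ^ (N + 1) := pow_pos (by norm_num) _
      rw [hcdef]; linarith
    have hx₁X : 2 * π * c ∈ Xset := by
      rw [hX]
      refine ⟨Or.inl ⟨c, hcC, rfl⟩, ?_⟩
      simp only [Set.mem_insert_iff, Set.mem_singleton_iff, not_or]
      constructor <;> intro h <;> nlinarith
    have hx₂X : 2 * π * c + 2 * π ∈ Xset := by
      rw [hX]
      refine ⟨Or.inr ⟨c, hcC, rfl⟩, ?_⟩
      simp only [Set.mem_insert_iff, Set.mem_singleton_iff, not_or]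
      constructor <;> intro h <;> nlinarith
    refine ⟨⟨Circle.exp (2 * π * c), ⟨2 * π * c, hx₁X, rfl⟩⟩, hUV hN,
      2 * π * c, hx₁X, 2 * π * c + 2 * π, hx₂X, by nlinarith, rfl, Circle.exp_add_two_pi _⟩
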